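/- Let X be a symmetric Markov process on ℝ with symmetrizing measure μ admitting a symmetric heat kernel p(t,x,y) with respect to μ. Then for all x ∈ ℝ, R > 0 and t > 0, p(2t,x,x) ≥ P^x(τ_{B(x,R)} > t)² / μ(B(x,R)), where τ_{B(x,R)} is the exit time from B(x,R) = (x−R, x+R). -/

import Mathlib

open MeasureTheory Set

/-- On-diagonal lower bound from survival probability: if `p` is a symmetric heat kernel
with respect to `μ` satisfying Chapman–Kolmogorov, and the Dirichlet heat kernel `pD` of
the ball `B(x,R)` satisfies `0 ≤ pD ≤ p` with survival probability
`P^x(τ_{B(x,R)} > t) = ∫_{B(x,R)} pD(t,x,z) μ(dz)`, then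
`p(2t,x,x) ≥ P^x(τ_{B(x,R)} > t)² / μ(B(x,R))`. -/
theorem on_diagonal_lower_from_survival (μ : Measure ℝ)
    (p pD : ℝ → ℝ → ℝ → ℝ) (x R t : ℝ) (hR : 0 < R) (ht : 0 < t)
    (hsymm : ∀ s y z, p s y z = p s z y)
    (hCK : p (2 * t) x x = ∫ z, (p t x z) ^ 2 ∂μ)
    (hL2 : Integrable (fun z => (p t x z) ^ 2) μ)
    (hpDnn : ∀ z, 0 ≤ pD t x z)
    (hpDle : ∀ z, pD t x z ≤ p t x z)
    (q : ℝ) (hq : q = ∫ z in Ioo (x - R) (x + R), pD t x z ∂μ) :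
    q ^ 2 / (μ (Ioo (x - R) (x + R))).toReal ≤ p (2 * t) x x := by
  set I := Ioo (x - R) (x + R) with hI
  have hRHSnn : 0 ≤ ∫ z, (p t x z) ^ 2 ∂μ :=
    integral_nonneg fun z => sq_nonneg _
  set m := (μ I).toReal with hm
  by_cases hm0 : m = 0
  · rw [hm0, div_zero, hCK]; exact hRHSnn
  have hmpos : 0 < m := lt_of_le_of_ne ENNReal.toReal_nonneg (Ne.symm hm0)
  have hμI_ne_top : μ I ≠ ⊤ := by
    intro h
    exact hm0 (by rw [hm, h, ENNReal.toReal_top])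
  haveI : IsFiniteMeasure (μ.restrict I) :=
    ⟨by rwa [Measure.restrict_apply_univ, lt_top_iff_ne_top]⟩
  by_cases hint : Integrable (fun z => pD t x z) (μ.restrict I)
  · -- Cauchy–Schwarz
    have hms : AEStronglyMeasurable (fun z => (pD t x z) ^ 2) (μ.restrict I) := by
      exact hint.aestronglyMeasurable.pow 2
    have hpD2int : Integrable (fun z => (pD t x z) ^ 2) (μ.restrict I) := by
      refine Integrable.mono (hL2.restrict (s := I)) hms ?_
      filter_upwards with z
      rw [Real.norm_of_nonneg (sq_nonneg _), Real.norm_of_nonneg (sq_nonneg _)]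
      exact pow_le_pow_left₀ (hpDnn z) (hpDle z) 2
    have hof2 : ENNReal.ofReal 2 = (2 : ENNReal) := by norm_num
    have hMem : MemLp (fun z => pD t x z) (ENNReal.ofReal 2) (μ.restrict I) := by
      rw [hof2]
      exact (memLp_two_iff_integrable_sq hint.aestronglyMeasurable).mpr hpD2int
    have hMem1 : MemLp (fun _ : ℝ => (1 : ℝ)) (ENNReal.ofReal 2) (μ.restrict I) :=
      memLp_const 1
    have hCS := integral_mul_le_Lp_mul_Lq_of_nonneg (μ := μ.restrict I)
      (Real.holderConjugate_iff.mpr ⟨by norm_num, by norm_num⟩ : Real.HolderConjugate 2 2)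
      (f := fun z => pD t x z) (g := fun _ => (1 : ℝ))
      (Filter.Eventually.of_forall fun z => hpDnn z)
      (Filter.Eventually.of_forall fun _ => zero_le_one)
      hMem hMem1
    simp only [mul_one, Real.one_rpow] at hCS
    have hconst : ∫ _ : ℝ, (1 : ℝ) ∂(μ.restrict I) = m := by
      rw [integral_const, smul_eq_mul, mul_one, measureReal_def, Measure.restrict_apply_univ]
    rw [hconst] at hCS
    have hA : ∫ z in I, (pD t x z) ^ (2:ℝ) ∂μ = ∫ z in I, (pD t x z) ^ 2 ∂μ := by
      refine integral_congr_ae (Filter.Eventually.of_forall fun z => ?_)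
      show (pD t x z) ^ (2 : ℝ) = pD t x z ^ 2
      rw [← Real.rpow_natCast (pD t x z) 2]; norm_num
    rw [hA] at hCS
    set A := ∫ z in I, (pD t x z) ^ 2 ∂μ with hAdef
    have hAnn : 0 ≤ A := integral_nonneg fun z => sq_nonneg _
    have hqnn : 0 ≤ q := hq ▸ integral_nonneg fun z => hpDnn z
    have hq' : q ≤ A ^ (1/(2:ℝ)) * m ^ (1/(2:ℝ)) := hq ▸ hCS
    have hsq : q ^ 2 ≤ A * m := by
      calc q ^ 2 ≤ (A ^ (1/(2:ℝ)) * m ^ (1/(2:ℝ))) ^ 2 :=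
            pow_le_pow_left₀ hqnn hq' 2
        _ = A * m := by
            rw [mul_pow, ← Real.rpow_natCast (A ^ (1/(2:ℝ))) 2,
              ← Real.rpow_natCast (m ^ (1/(2:ℝ))) 2,
              ← Real.rpow_mul hAnn, ← Real.rpow_mul hmpos.le]
            norm_num
    have hAle : A ≤ ∫ z, (p t x z) ^ 2 ∂μ := by
      calc A ≤ ∫ z in I, (p t x z) ^ 2 ∂μ := by
            refine integral_mono hpD2int (hL2.restrict) fun z => ?_
            exact pow_le_pow_left₀ (hpDnn z) (hpDle z) 2
        _ ≤ ∫ z, (p t x z) ^ 2 ∂μ :=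
            setIntegral_le_integral hL2
              (Filter.Eventually.of_forall fun z => sq_nonneg _)
    rw [div_le_iff₀ hmpos, hCK]
    calc q ^ 2 ≤ A * m := hsq
      _ ≤ (∫ z, (p t x z) ^ 2 ∂μ) * m := by
          exact mul_le_mul_of_nonneg_right hAle hmpos.le
  · have : q = 0 := by rw [hq, integral_undef hint]
    rw [this]
    simpa [hCK] using hRHSnn
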